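/- For all integers m ≥ 1 and d ≥ m, one has 2·C(m+2, 3) > Σ_{i=0}^{m−1} (d+1−i)(i+1) (sum taken in the integers) if and only if 3d < 4m − 1. Equivalently, 6·(2·C(m+2, 3) − Σ_{i=0}^{m−1} (d+1−i)(i+1)) = m(4m² + 3m − 1 − 3d − 3md). -/

import Mathlib

open Finset

lemma choose3 (m : ℕ) : (6 : ℤ) * ((m + 2).choose 3 : ℤ) = m * (m + 1) * (m + 2) := by
  induction m with
  | zero => decide
  | succ n ih =>
      have h : (n + 1 + 2).choose 3 = (n + 2).choose 2 + (n + 2).choose 3 :=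
        Nat.choose_succ_succ' (n + 2) 2
      have h2 : ((n + 2).choose 2 : ℤ) * 2 = (n + 2) * (n + 1) := by
        have h3 : (n + 2).choose 2 * 2 = (n + 2) * (n + 1) := by
          rw [Nat.choose_two_right, show n + 2 - 1 = n + 1 from rfl,
            Nat.div_mul_cancel (by rw [mul_comm]; exact (Nat.even_mul_succ_self (n + 1)).two_dvd)]
        exact_mod_cast congrArg (Nat.cast : ℕ → ℤ) h3
      rw [h]
      push_cast
      linarith [ih]

lemma key (m d : ℕ) :
    6 * (2 * ((m + 2).choose 3 : ℤ) - ∑ i ∈ Finset.range m, ((d : ℤ) + 1 - i) * (i + 1)) =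
      (m : ℤ) * ((m : ℤ) + 1) * (4 * m - 1 - 3 * d) := by
  induction m with
  | zero => simp
  | succ n ih =>
      rw [Finset.sum_range_succ]
      have c1 := choose3 n
      have c2 := choose3 (n + 1)
      push_cast at c2 ⊢
      push_cast at ih
      linarith [ih]

theorem stmt_11 (m d : ℕ) (hm : 1 ≤ m) (hd : m ≤ d) :
    (2 * ((m + 2).choose 3 : ℤ) > ∑ i ∈ Finset.range m, ((d : ℤ) + 1 - i) * (i + 1) ↔
      3 * (d : ℤ) < 4 * (m : ℤ) - 1) ∧
    6 * (2 * ((m + 2).choose 3 : ℤ) - ∑ i ∈ Finset.range m, ((d : ℤ) + 1 - i) * (i + 1)) =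
      (m : ℤ) * (4 * (m : ℤ) ^ 2 + 3 * (m : ℤ) - 1 - 3 * (d : ℤ) - 3 * (m : ℤ) * (d : ℤ)) := by
  have hk := key m d
  have hm' : (1 : ℤ) ≤ (m : ℤ) := by exact_mod_cast hm
  have hmm : (0:ℤ) < (m:ℤ) * ((m:ℤ) + 1) := by positivity
  constructor
  · constructor
    · intro h
      by_contra hc
      push_neg at hc
      have hX : 4 * (m:ℤ) - 1 - 3 * d ≤ 0 := by linarith
      have := mul_nonpos_of_nonneg_of_nonpos hmm.le hX
      linarith
    · intro h
      have hX : (0:ℤ) < 4 * (m:ℤ) - 1 - 3 * d := by linarith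
      have := mul_pos hmm hX
      linarith
  · rw [hk]; ring
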